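/- arXiv:1011.3559 — 5 statements merged into one kernel-verified Lean document; each statement's English description precedes it below -/
import Mathlib

section
/- Let $P$ be a finite $p$-group, $Q \leq P$ a subgroup, and $k$ a field of characteristic $p$. Then the Jacobson radical of the centralizer algebra $kP^Q$ equals $\ker(\varepsilon) \cap kP^Q$, where $\varepsilon : kP \to k$ is the augmentation map. In particular, $kP^Q$ is a local algebra. -/
set_option synthInstance.maxHeartbeats 1000000
set_option maxHeartbeats 1000000
set_option maxRecDepth 8000

open MonoidAlgebra Finset
open scoped Classical

/-- The centralizer algebra `kP^Q`: the subalgebra of the group algebra `kP`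
fixed by the conjugation action of the subgroup `Q`. -/
noncomputable def centAlg (k : Type*) [Field k] {P : Type*} [Group P] (Q : Subgroup P) :
    Subalgebra k (MonoidAlgebra k P) :=
  ⨅ q ∈ Q, AlgHom.equalizer
    (MonoidAlgebra.domCongr k k (MulAut.conj q : P ≃* P)).toAlgHom (AlgHom.id k _)

/-- The augmentation map `kP → k`. -/
noncomputable def aug (k : Type*) [Field k] (P : Type*) [Group P] :
    MonoidAlgebra k P →ₐ[k] k := MonoidAlgebra.lift k k P 1

/-- The Jacobson radical of a `k`-algebra, as a `k`-submodule. -/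
noncomputable def jacRad (k : Type*) [Field k] (A : Type*) [Ring A] [Algebra k A] :
    Submodule k A :=
  Submodule.restrictScalars k ((⊥ : Ideal A).jacobson)

/-- The Loewy length: the least `d` with `J^d = 0`. -/
noncomputable def llen (k : Type*) [Field k] (A : Type*) [Ring A] [Algebra k A] : ℕ :=
  sInf {d | jacRad k A ^ d = ⊥}

/-- The `Q`-conjugation orbit sum `κ_x ∈ kP`. -/
noncomputable def kappa {k : Type*} [Field k] {P : Type*} [Group P] [Fintype P]
    (Q : Subgroup P) (x : P) : MonoidAlgebra k P :=
  ∑ y ∈ Finset.univ.filter (fun y => ∃ q ∈ Q, q * x * q⁻¹ = y), MonoidAlgebra.single y 1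

/-- The span `I` of the orbit sums `κ_x`, `x ∉ C_P(Q)`. -/
noncomputable def idealI (k : Type*) [Field k] {P : Type*} [Group P] [Fintype P]
    (Q : Subgroup P) : Submodule k (MonoidAlgebra k P) :=
  Submodule.span k
    {f | ∃ x ∉ Subgroup.centralizer (Q : Set P), f = kappa Q x}

/-- The span of `C_P(Q)` inside `kP`, i.e. the subalgebra `kC_P(Q)`. -/
noncomputable def subC (k : Type*) [Field k] {P : Type*} [Group P]
    (Q : Subgroup P) : Submodule k (MonoidAlgebra k P) :=
  Submodule.span k
    {f | ∃ c ∈ Subgroup.centralizer (Q : Set P), f = MonoidAlgebra.single c (1 : k)}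

/-- The radical `J' = J(kC_P(Q))`, i.e. the augmentation-trivial part of `kC_P(Q)`. -/
noncomputable def jacC (k : Type*) [Field k] {P : Type*} [Group P]
    (Q : Subgroup P) : Submodule k (MonoidAlgebra k P) :=
  subC k Q ⊓ LinearMap.ker (aug k P).toLinearMap


section Aux
variable {k : Type*} [Field k]

lemma aug_single {P : Type*} [Group P] (g : P) (a : k) :
    aug k P (MonoidAlgebra.single g a) = a := by
  simp [aug, MonoidAlgebra.lift_single]

lemma aug_mapDomain {P H : Type*} [Group P] [Group H] (f : P →* H) (x : MonoidAlgebra k P) :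
    aug k H (MonoidAlgebra.mapDomainAlgHom k k f x) = aug k P x := by
  have h : (aug k H).comp (MonoidAlgebra.mapDomainAlgHom k k f) = aug k P := by
    apply MonoidAlgebra.algHom_ext
    intro g
    simp [MonoidAlgebra.mapDomainAlgHom_apply, Finsupp.mapDomain_single, aug_single]
    exact Subsingleton.elim _ _
  exact DFunLike.congr_fun h x

lemma single_central {P : Type*} [Group P] {z : P} (hz : z ∈ Subgroup.center P)
    (y : MonoidAlgebra k P) :
    y * MonoidAlgebra.single z (1:k) = MonoidAlgebra.single z (1:k) * y := by
  induction y using MonoidAlgebra.induction_linear with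
  | zero => simp
  | add f g hf hg => rw [add_mul, mul_add, hf, hg]
  | single g a =>
      rw [MonoidAlgebra.single_mul_single, MonoidAlgebra.single_mul_single,
        Subgroup.mem_center_iff.mp hz g, one_mul, mul_one]

noncomputable def mapD {P H : Type*} (σ : P → H) :
    MonoidAlgebra k P →ₗ[k] MonoidAlgebra k H := MonoidAlgebra.mapDomainLinearMap k k σ

lemma mapD_single {P H : Type*} (σ : P → H) (g : P) (a : k) :
    mapD σ (MonoidAlgebra.single g a) = MonoidAlgebra.single (σ g) a :=
  MonoidAlgebra.mapDomainLinearMap_single _ _ _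

lemma mapD_comp {P H G : Type*} (σ : P → H) (τ : H → G) (x : MonoidAlgebra k P) :
    mapD (τ ∘ σ) x = mapD τ (mapD σ x) :=
  LinearMap.congr_fun (MonoidAlgebra.mapDomainLinearMap_comp σ τ) x

lemma mypow_mono {A : Type*} [Semiring A] [Algebra k A] {M N : Submodule k A}
    (h : M ≤ N) : ∀ t, M ^ t ≤ N ^ t
  | 0 => le_rfl
  | t+1 => by
      rw [pow_succ, pow_succ]
      exact mul_le_mul' (mypow_mono h t) h

end Aux

universe u

lemma augKer_nilpotent {p : ℕ} [Fact p.Prime] (k : Type*) [Field k] [CharP k p] :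
    ∀ (n : ℕ) (P : Type u) [Group P] [Fintype P], Fintype.card P ≤ n → IsPGroup p P →
      ∃ m : ℕ, (LinearMap.ker (aug k P).toLinearMap) ^ m = ⊥ := by
  intro n
  induction n with
  | zero =>
      intro P _ _ hcard _
      exact absurd (Fintype.card_pos (α := P)) (by omega)
  | succ n ih =>
      intro P _ _ hcard hP
      by_cases hcard1 : Fintype.card P ≤ 1
      · -- trivial group
        haveI : Subsingleton P := Fintype.card_le_one_iff_subsingleton.mp hcard1
        refine ⟨1, ?_⟩
        rw [pow_one, eq_bot_iff]
        intro x hx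
        have hx0 : aug k P x = 0 := hx
        have hxs : x = MonoidAlgebra.single (1 : P) (x.coeff 1) := by
          ext a
          rw [Subsingleton.elim a (1 : P), MonoidAlgebra.coeff_single, Finsupp.single_eq_same]
        have hx1 : x.coeff (1 : P) = 0 := by
          have h2 := congrArg (aug k P) hxs
          rw [aug_single, hx0] at h2
          exact h2.symm
        rw [Submodule.mem_bot, hxs, hx1]
        simp
      · push_neg at hcard1
        haveI : Nontrivial P := Fintype.one_lt_card_iff_nontrivial.mp hcard1
        haveI := hP.center_nontrivial
        obtain ⟨zc, hzc⟩ := exists_ne (1 : Subgroup.center P)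
        set z : P := (zc : P) with hzdef
        have hz : z ∈ Subgroup.center P := zc.2
        have hz1 : z ≠ 1 := fun h =>
          hzc (Subtype.ext (h.trans (OneMemClass.coe_one _).symm))
        set N : Subgroup P := Subgroup.zpowers z with hNdef
        haveI hNormal : N.Normal := by
          constructor
          intro m hm g
          have hcm : m ∈ Subgroup.center P := (Subgroup.zpowers_le.mpr hz) hm
          rw [Subgroup.mem_center_iff.mp hcm g, mul_inv_cancel_right]
          exact hm
        haveI : Fintype (P ⧸ N) := Fintype.ofFinite _
        have hQcard : Fintype.card (P ⧸ N) ≤ n := by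
          haveI : Nontrivial N :=
            ⟨⟨⟨z, Subgroup.mem_zpowers z⟩, 1,
              fun h => hz1 ((Subtype.ext_iff.mp h).trans (OneMemClass.coe_one _))⟩⟩
          have h2 : 1 < Fintype.card N := Fintype.one_lt_card
          have hl : Fintype.card P = Fintype.card (P ⧸ N) * Fintype.card N := by
            have := Subgroup.card_eq_card_quotient_mul_card_subgroup N
            simpa [Nat.card_eq_fintype_card] using this
          have h3 : 0 < Fintype.card (P ⧸ N) := Fintype.card_pos
          nlinarith
        obtain ⟨m, hm⟩ := ih (P ⧸ N) hQcard (hP.to_quotient N)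
        -- notation
        set π : P →* P ⧸ N := QuotientGroup.mk' N with hπdef
        set φ : MonoidAlgebra k P →ₐ[k] MonoidAlgebra k (P ⧸ N) :=
          MonoidAlgebra.mapDomainAlgHom k k π with hφdef
        set K : Submodule k (MonoidAlgebra k P) := LinearMap.ker (aug k P).toLinearMap with hK
        set K' : Submodule k (MonoidAlgebra k (P ⧸ N)) :=
          LinearMap.ker (aug k (P ⧸ N)).toLinearMap with hK'
        set δ : MonoidAlgebra k P := MonoidAlgebra.single z 1 - 1 with hδdef
        have hδcomm : ∀ y : MonoidAlgebra k P, Commute δ y := by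
          intro y
          have := single_central hz y
          unfold δ
          rw [Commute, SemiconjBy, sub_mul, mul_sub, one_mul, mul_one, this]
        set D : ℕ → Submodule k (MonoidAlgebra k P) :=
          fun t => LinearMap.range (LinearMap.mulRight k (δ ^ t)) with hDdef
        -- Step 1: map φ K ≤ K'
        have step1 : Submodule.map φ.toLinearMap K ≤ K' := by
          rintro _ ⟨x, hx, rfl⟩
          have hx0 : aug k P x = 0 := hx
          show aug k (P ⧸ N) (φ x) = 0
          rw [hφdef]
          rw [aug_mapDomain]
          exact hx0
        -- Step 2: K ^ m ≤ ker φ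
        have step2 : K ^ m ≤ LinearMap.ker φ.toLinearMap := by
          intro x hx
          have h1 : φ x ∈ (Submodule.map φ.toLinearMap K) ^ m := by
            rw [← Submodule.map_pow]
            exact Submodule.mem_map_of_mem hx
          have h2 : φ x ∈ (⊥ : Submodule k (MonoidAlgebra k (P ⧸ N))) := by
            rw [← hm]
            exact mypow_mono step1 m h1
          simpa using h2
        -- elements single n 1 - 1 for n ∈ N
        have hNelt : ∀ j : ℕ, ∃ w : MonoidAlgebra k P,
            w * δ = MonoidAlgebra.single (z ^ j) (1:k) - 1 := by
          intro j
          induction j with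
          | zero => exact ⟨0, by simp [MonoidAlgebra.one_def]⟩
          | succ j ihj =>
              obtain ⟨w, hw⟩ := ihj
              refine ⟨MonoidAlgebra.single (z ^ j) 1 + w, ?_⟩
              rw [add_mul, hw, hδdef, mul_sub, mul_one, MonoidAlgebra.single_mul_single,
                mul_one, ← pow_succ]
              abel
        -- Step 3: ker φ ≤ D 1
        have step3 : LinearMap.ker φ.toLinearMap ≤ D 1 := by
          intro x hx
          have hφx : mapD (⇑π) x = 0 := by
            have h5 : φ x = 0 := hx
            rw [hφdef, MonoidAlgebra.mapDomainAlgHom_apply] at h5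
            exact h5
          have hdiff : ∀ y : MonoidAlgebra k P,
              y - mapD (fun g : P => (π g).out) y ∈ D 1 := by
            intro y
            induction y using MonoidAlgebra.induction_linear with
            | zero => simp [Submodule.zero_mem]
            | add f g hf hg =>
                rw [map_add]
                have := Submodule.add_mem _ hf hg
                convert this using 1
                rw [add_sub_add_comm]
            | single g a =>
                rw [mapD_single]
                set g' : P := ((π g).out) with hg'def
                have hng : g⁻¹ * g' ∈ N := by
                  have : π g = π g' := by
                    rw [hg'def]
                    exact (QuotientGroup.out_eq' (π g)).symm
                  exact (QuotientGroup.eq ).mp this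
                obtain ⟨j, hj⟩ := Submonoid.mem_powers_iff _ _ |>.mp
                  (mem_powers_iff_mem_zpowers.mpr hng)
                obtain ⟨w, hw⟩ := hNelt j
                rw [hj] at hw
                refine ⟨-(MonoidAlgebra.single g a) * w, ?_⟩
                rw [LinearMap.mulRight_apply, pow_one, mul_assoc, hw, neg_mul, mul_sub,
                  mul_one, MonoidAlgebra.single_mul_single, mul_one,
                  show g * (g⁻¹ * g') = g' from by group, neg_sub]
          have hres := hdiff x
          have hcomp : mapD (fun g : P => (π g).out) x
              = mapD (Quotient.out) (mapD (⇑π) x) :=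
            mapD_comp _ _ _
          rwa [hcomp, hφx, map_zero, sub_zero] at hres
        -- Step 4: products of D
        have step4 : ∀ s t : ℕ, D s * D t ≤ D (s + t) := by
          intro s t
          rw [Submodule.mul_le]
          rintro _ ⟨r, rfl⟩ _ ⟨w, rfl⟩
          refine ⟨r * w, ?_⟩
          simp only [LinearMap.mulRight_apply]
          calc (r * w) * δ ^ (s + t) = r * (w * δ ^ s) * δ ^ t := by
                rw [pow_add, mul_assoc, mul_assoc, mul_assoc]
            _ = r * (δ ^ s * w) * δ ^ t := by rw [((hδcomm w).pow_left s).eq]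
            _ = (r * δ ^ s) * (w * δ ^ t) := by
                rw [mul_assoc, mul_assoc, mul_assoc]
        have step5 : ∀ t : ℕ, D 1 ^ (t + 1) ≤ D (t + 1) := by
          intro t
          induction t with
          | zero => rw [pow_one]
          | succ t iht =>
              rw [pow_succ]
              exact le_trans (mul_le_mul' iht le_rfl) (step4 (t + 1) 1)
        -- Step 6: δ is nilpotent
        haveI : CharP (MonoidAlgebra k P) p :=
          charP_of_injective_algebraMap (algebraMap k (MonoidAlgebra k P)).injective p
        obtain ⟨v, hv⟩ := hP z
        have hδ0 : δ ^ (p ^ v) = 0 := by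
          rw [hδdef, sub_pow_char_pow_of_commute p v (Commute.one_right _), one_pow,
            MonoidAlgebra.single_pow, hv, one_pow, MonoidAlgebra.one_def, sub_self]
        -- combine
        refine ⟨m * p ^ v, ?_⟩
        rw [eq_bot_iff]
        have hpv : p ^ v = (p ^ v - 1) + 1 := by
          have : 0 < p ^ v := pow_pos (Fact.out (p := p.Prime)).pos v
          omega
        calc K ^ (m * p ^ v) = (K ^ m) ^ (p ^ v) := by rw [pow_mul]
          _ ≤ (D 1) ^ (p ^ v) := mypow_mono (le_trans step2 step3) _
          _ ≤ D (p ^ v) := by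
              rw [hpv]
              exact step5 _
          _ ≤ ⊥ := by
              rintro _ ⟨r, rfl⟩
              simp [LinearMap.mulRight_apply, hδ0]

section Abstract

variable {k : Type*} [Field k] {A : Type*} [Ring A] [Algebra k A]

/-- The kernel of an algebra character, as an ideal. -/
noncomputable def charKer (e : A →ₐ[k] k) : Ideal A where
  carrier := {a : A | e a = 0}
  add_mem' := fun {a b} ha hb => by
    have ha' : e a = 0 := ha
    have hb' : e b = 0 := hb
    show e (a + b) = 0
    rw [map_add, ha', hb', add_zero]
  zero_mem' := by show e 0 = 0; rw [map_zero]
  smul_mem' := fun c x hx => by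
    have hx' : e x = 0 := hx
    show e (c • x) = 0
    rw [smul_eq_mul, map_mul, hx', mul_zero]

lemma charKer_mem (e : A →ₐ[k] k) (a : A) : a ∈ charKer e ↔ e a = 0 := Iff.rfl

lemma charKer_isMaximal (e : A →ₐ[k] k) : (charKer e).IsMaximal := by
  rw [Ideal.isMaximal_iff]
  constructor
  · intro h1
    rw [charKer_mem, map_one] at h1
    exact one_ne_zero h1
  · intro J x hle hxM hxJ
    set c := e x with hc
    have hc0 : c ≠ 0 := fun h => hxM ((charKer_mem e x).mpr h)
    have h1 : x - algebraMap k A c ∈ charKer e := by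
      rw [charKer_mem, map_sub, AlgHom.commutes, Algebra.algebraMap_self_apply, ← hc, sub_self]
    have h2 : algebraMap k A c ∈ J := by
      have := J.sub_mem hxJ (hle h1)
      simpa using this
    have h3 := J.smul_mem (algebraMap k A c⁻¹) h2
    rw [smul_eq_mul, ← map_mul, inv_mul_cancel₀ hc0, map_one] at h3
    exact h3

lemma jac_iff_char (e : A →ₐ[k] k) (hnil : ∀ a : A, e a = 0 → IsNilpotent a) (a : A) :
    a ∈ (⊥ : Ideal A).jacobson ↔ e a = 0 := by
  constructor
  · intro ha
    have hle : (⊥ : Ideal A).jacobson ≤ charKer e := sInf_le ⟨bot_le, charKer_isMaximal e⟩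
    exact (charKer_mem e a).mp (hle ha)
  · intro ha
    rw [Ideal.jacobson, Submodule.mem_sInf]
    intro M hM
    obtain ⟨-, hMmax⟩ := hM
    by_contra hxM
    have hlt : M < M ⊔ Ideal.span {a} := by
      refine lt_of_le_of_ne le_sup_left (fun h => hxM ?_)
      rw [h]
      exact Submodule.mem_sup_right (Ideal.subset_span rfl)
    have htop : M ⊔ Ideal.span {a} = ⊤ := hMmax.1.2 _ hlt
    have h1 : (1 : A) ∈ M ⊔ Ideal.span {a} := by rw [htop]; trivial
    obtain ⟨y, hyM, s, hs, hys⟩ := Submodule.mem_sup.mp h1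
    obtain ⟨r, rfl⟩ := Submodule.mem_span_singleton.mp hs
    have hra : e (r • a) = 0 := by
      rw [smul_eq_mul, map_mul, ha, mul_zero]
    have hyunit : IsUnit y := by
      have hy : y = 1 - r • a := by rw [← hys]; abel
      rw [hy]
      exact (hnil _ hra).isUnit_one_sub
    exact hMmax.ne_top (Ideal.eq_top_of_isUnit_mem M hyM hyunit)

lemma local_of_char (e : A →ₐ[k] k) (hnil : ∀ a : A, e a = 0 → IsNilpotent a) :
    IsLocalRing A := by
  haveI hnt : Nontrivial A := by
    refine nontrivial_of_ne 1 0 (fun h => ?_)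
    have := congrArg e h
    rw [map_one, map_zero] at this
    exact one_ne_zero this
  have keyn : ∀ x : A, e x = 0 → ¬IsUnit x := by
    intro x hx hux
    obtain ⟨n, hn⟩ := hnil x hx
    have := IsUnit.pow n hux
    rw [hn] at this
    exact zero_ne_one (isUnit_zero_iff.mp this)
  have keyu : ∀ x : A, e x ≠ 0 → IsUnit x := by
    intro x hc0
    set c := e x with hc
    have h1 : IsUnit (algebraMap k A c) :=
      (algebraMap k A).isUnit_map (isUnit_iff_ne_zero.mpr hc0)
    have hsub : e (x - algebraMap k A c) = 0 := by
      rw [map_sub, AlgHom.commutes, Algebra.algebraMap_self_apply, ← hc, sub_self]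
    obtain ⟨n, hn⟩ := hnil _ hsub
    have hnl : IsNilpotent (algebraMap k A c⁻¹ * (x - algebraMap k A c)) := by
      refine ⟨n, ?_⟩
      have hcm : Commute (algebraMap k A c⁻¹) (x - algebraMap k A c) :=
        Algebra.commutes c⁻¹ _
      rw [hcm.mul_pow, hn, mul_zero]
    have h2 : IsUnit (1 + algebraMap k A c⁻¹ * (x - algebraMap k A c)) :=
      hnl.isUnit_one_add
    have hxx : x = algebraMap k A c * (1 + algebraMap k A c⁻¹ * (x - algebraMap k A c)) := by
      rw [mul_add, mul_one, ← mul_assoc, ← map_mul, mul_inv_cancel₀ hc0, map_one, one_mul]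
      abel
    rw [hxx]
    exact h1.mul h2
  refine { toNontrivial := hnt, isUnit_or_isUnit_of_add_one := ?_ }
  intro a b hab
  by_contra hcon
  rw [not_or] at hcon
  obtain ⟨ha, hb⟩ := hcon
  have ha0 : e a = 0 := by by_contra h; exact ha (keyu a h)
  have hb0 : e b = 0 := by by_contra h; exact hb (keyu b h)
  have h1 := congrArg e hab
  rw [map_add, map_one, ha0, hb0, add_zero] at h1
  exact zero_ne_one h1

end Abstract

theorem stmt_0 {p : ℕ} [Fact p.Prime] (k : Type*) [Field k] [CharP k p]
    (P : Type*) [Group P] [Fintype P] (hP : IsPGroup p P) (Q : Subgroup P) :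
    (∀ a : centAlg k Q, a ∈ (⊥ : Ideal (centAlg k Q)).jacobson ↔
      aug k P (a : MonoidAlgebra k P) = 0) ∧
    IsLocalRing (centAlg k Q) := by
  classical
  obtain ⟨m, hm⟩ := augKer_nilpotent k (Fintype.card P) P le_rfl hP
  have hnil : ∀ x : MonoidAlgebra k P, aug k P x = 0 → IsNilpotent x := by
    intro x hx
    refine ⟨m, ?_⟩
    have h1 : x ^ m ∈ (LinearMap.ker (aug k P).toLinearMap) ^ m :=
      Submodule.pow_mem_pow _ (by simpa using hx) m
    rw [hm] at h1
    simpa using h1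
  set e : centAlg k Q →ₐ[k] k := (aug k P).comp (centAlg k Q).val with he
  have he' : ∀ a : centAlg k Q, e a = aug k P (a : MonoidAlgebra k P) := fun a => rfl
  have hnilA : ∀ a : centAlg k Q, e a = 0 → IsNilpotent a := by
    intro a ha
    rw [he'] at ha
    obtain ⟨n, hn⟩ := hnil (a : MonoidAlgebra k P) ha
    refine ⟨n, Subtype.ext ?_⟩
    rw [SubmonoidClass.coe_pow, hn, ZeroMemClass.coe_zero]
  constructor
  · intro a
    rw [← he']
    exact jac_iff_char e hnilA a
  · exact local_of_char e hnilA
end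

section
/- Let $P$ be a finite $p$-group with subgroup $Q$, $k$ a field of characteristic $p$, and let $x, y \in P \setminus C_P(Q)$. If $c \in C_P(Q)$, then the coefficient of $c$ in the product $\kappa_x \kappa_y \in kP$ is zero, where $\kappa_x = \sum_{q \in Q/C_Q(x)} {}^q x$. -/
set_option synthInstance.maxHeartbeats 1000000
set_option maxHeartbeats 1000000

open MonoidAlgebra Finset
open scoped Classical

theorem stmt_2 {p : ℕ} [Fact p.Prime] (k : Type*) [Field k] [CharP k p]
    (P : Type*) [Group P] [Fintype P] (hP : IsPGroup p P) (Q : Subgroup P) (x y c : P)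
    (hx : x ∉ Subgroup.centralizer (Q : Set P)) (hy : y ∉ Subgroup.centralizer (Q : Set P))
    (hc : c ∈ Subgroup.centralizer (Q : Set P)) :
    (kappa (k := k) Q x * kappa (k := k) Q y).coeff c = 0 := by
  classical
  set Sx := Finset.univ.filter (fun z => ∃ q ∈ Q, q * x * q⁻¹ = z) with hSx
  set Sy := Finset.univ.filter (fun z => ∃ q ∈ Q, q * y * q⁻¹ = z) with hSy
  set S := (Sx ×ˢ Sy).filter (fun ab => ab.1 * ab.2 = c) with hS
  have hcoef : (kappa (k := k) Q x * kappa (k := k) Q y).coeff c = (S.card : k) := by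
    have h1 : (kappa (k := k) Q x * kappa (k := k) Q y).coeff c
        = ∑ ab ∈ Sx ×ˢ Sy, (if ab.1 * ab.2 = c then (1 : k) else 0) := by
      rw [kappa, kappa, Finset.sum_mul_sum, Finset.sum_product, MonoidAlgebra.coeff_sum, Finsupp.finset_sum_apply]
      refine Finset.sum_congr rfl fun a _ => ?_
      rw [MonoidAlgebra.coeff_sum, Finsupp.finset_sum_apply]
      refine Finset.sum_congr rfl fun b _ => ?_
      rw [MonoidAlgebra.single_mul_single, MonoidAlgebra.coeff_single, Finsupp.single_apply]
      simp [eq_comm]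
    rw [h1, Finset.sum_boole, hS]
  rw [hcoef]
  -- Q acts on S by simultaneous conjugation
  have hmem : ∀ (q : Q) (ab : P × P), ab ∈ S →
      ((q : P) * ab.1 * (q : P)⁻¹, (q : P) * ab.2 * (q : P)⁻¹) ∈ S := by
    rintro ⟨q, hq⟩ ⟨a, b⟩ hab
    simp only [hS, Finset.mem_filter, Finset.mem_product, hSx, hSy,
      Finset.mem_univ, true_and] at hab ⊢
    obtain ⟨⟨⟨qa, hqa, ha⟩, ⟨qb, hqb, hb⟩⟩, habc⟩ := hab
    refine ⟨⟨⟨q * qa, Q.mul_mem hq hqa, by rw [mul_inv_rev]; group; rw [← ha]; group⟩,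
      ⟨q * qb, Q.mul_mem hq hqb, by rw [mul_inv_rev]; group; rw [← hb]; group⟩⟩, ?_⟩
    have : q * (a * b) * q⁻¹ = c := by
      rw [habc, Subgroup.mem_centralizer_iff] at *
      rw [hc q hq]; group
    calc q * a * q⁻¹ * (q * b * q⁻¹) = q * (a * b) * q⁻¹ := by group
    _ = c := this
  letI : MulAction Q {ab : P × P // ab ∈ S} :=
    { smul := fun q s => ⟨_, hmem q s.1 s.2⟩,
      one_smul := fun s => Subtype.ext (by
        show ((1:Q) * s.1.1 * _, _) = s.1; simp),
      mul_smul := fun q r s => Subtype.ext (show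
        ((↑(q*r) * s.1.1 * (↑(q*r) : P)⁻¹, ↑(q*r) * s.1.2 * (↑(q*r) : P)⁻¹) : P × P)
          = ((q:P) * ((r:P) * s.1.1 * (r:P)⁻¹) * (q:P)⁻¹,
             (q:P) * ((r:P) * s.1.2 * (r:P)⁻¹) * (q:P)⁻¹) from by
        rw [Prod.mk.injEq]
        refine ⟨?_, ?_⟩ <;> (push_cast; group)) }
  have hsmul : ∀ (q : Q) (s : {ab : P × P // ab ∈ S}),
      (q • s : {ab : P × P // ab ∈ S}).1
        = ((q : P) * s.1.1 * (q : P)⁻¹, (q : P) * s.1.2 * (q : P)⁻¹) := fun _ _ => rfl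
  have hfix : MulAction.fixedPoints Q {ab : P × P // ab ∈ S} = ∅ := by
    ext s
    simp only [Set.mem_empty_iff_false, iff_false]
    intro hsfix
    have hmemS := s.2
    simp only [hS, Finset.mem_filter, Finset.mem_product, hSx,
      Finset.mem_univ, true_and] at hmemS
    obtain ⟨⟨⟨qa, hqa, ha⟩, _⟩, _⟩ := hmemS
    have hacent : s.1.1 ∈ Subgroup.centralizer (Q : Set P) := by
      rw [Subgroup.mem_centralizer_iff]
      intro h hh
      have := congrArg (fun t => (Subtype.val t).1) (hsfix (⟨h, hh⟩ : Q))
      simp only [hsmul] at this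
      conv_rhs => rw [← this]
      group
    have hxa : x = s.1.1 := by
      have hc1 : qa * s.1.1 = s.1.1 * qa := by
        rw [Subgroup.mem_centralizer_iff] at hacent; exact hacent qa hqa
      have : qa * x = s.1.1 * qa := by rw [← ha]; group
      rw [← hc1] at this
      exact mul_left_cancel this
    exact hx (hxa ▸ hacent)
  have hQp : IsPGroup p Q := hP.to_subgroup Q
  have hmod := hQp.card_modEq_card_fixedPoints {ab : P × P // ab ∈ S}
  have h0 : Nat.card (MulAction.fixedPoints Q {ab : P × P // ab ∈ S}) = 0 := by
    rw [hfix]; simp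
  rw [h0] at hmod
  have hdvd : p ∣ S.card := by
    have hcard : Nat.card {ab : P × P // ab ∈ S} = S.card := by
      simp [Nat.card_eq_fintype_card]
    rw [hcard] at hmod
    exact Nat.modEq_zero_iff_dvd.mp hmod
  exact (CharP.cast_eq_zero_iff k p _).mpr hdvd
end

section
/- Let $P$ be a finite $p$-group with subgroup $Q$. If $P$ has nilpotency class 2, or $C_P(Q)$ is normal in $P$, or $C_P(Q) \leq Q$, then $J(kC)\,I = I\,J(kC)$, where $kP^Q = kC \ltimes I$ and $C = C_P(Q)$. -/
set_option synthInstance.maxHeartbeats 1000000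
set_option maxHeartbeats 1000000

open MonoidAlgebra Finset
open scoped Classical

section Aux
variable {k : Type*} [Field k] {P : Type*} [Group P] [Fintype P] (Q : Subgroup P)

lemma kappa_conj {a : P} (ha : a ∈ Q) (x : P) :
    (kappa Q (a * x * a⁻¹) : MonoidAlgebra k P) = kappa Q x := by
  unfold kappa
  congr 1
  apply Finset.filter_congr
  intro y _
  constructor
  · rintro ⟨q, hq, rfl⟩
    exact ⟨q * a, Q.mul_mem hq ha, by group⟩
  · rintro ⟨q, hq, rfl⟩
    exact ⟨q * a⁻¹, Q.mul_mem hq (Q.inv_mem ha), by group⟩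

lemma single_mul_kappa {c : P} (hc : c ∈ Subgroup.centralizer (Q : Set P)) (x : P) :
    (MonoidAlgebra.single c (1:k)) * kappa Q x = kappa Q (c * x) := by
  rw [Subgroup.mem_centralizer_iff] at hc
  unfold kappa
  rw [Finset.mul_sum]
  refine Finset.sum_nbij' (fun y => c * y) (fun y => c⁻¹ * y) ?_ ?_ ?_ ?_ ?_
  · intro y hy
    simp only [mem_filter, mem_univ, true_and] at hy ⊢
    obtain ⟨q, hq, rfl⟩ := hy
    refine ⟨q, hq, ?_⟩
    have H : Commute q c := hc q hq
    simp only [← mul_assoc]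
    rw [H.eq]
  · intro y hy
    simp only [mem_filter, mem_univ, true_and] at hy ⊢
    obtain ⟨q, hq, rfl⟩ := hy
    refine ⟨q, hq, ?_⟩
    have H : Commute q c := hc q hq
    simp only [← mul_assoc]
    rw [← H.inv_right.eq, mul_assoc q c⁻¹ c, inv_mul_cancel, mul_one]
  · intro y _; group
  · intro y _; group
  · intro y _
    rw [MonoidAlgebra.single_mul_single, one_mul]

lemma kappa_mul_single {c : P} (hc : c ∈ Subgroup.centralizer (Q : Set P)) (x : P) :
    kappa Q x * (MonoidAlgebra.single c (1:k)) = kappa Q (x * c) := by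
  rw [Subgroup.mem_centralizer_iff] at hc
  unfold kappa
  rw [Finset.sum_mul]
  refine Finset.sum_nbij' (fun y => y * c) (fun y => y * c⁻¹) ?_ ?_ ?_ ?_ ?_
  · intro y hy
    simp only [mem_filter, mem_univ, true_and] at hy ⊢
    obtain ⟨q, hq, rfl⟩ := hy
    refine ⟨q, hq, ?_⟩
    have H : Commute q⁻¹ c := (Commute.inv_left (hc q hq))
    simp only [← mul_assoc]
    rw [mul_assoc (q * x) c q⁻¹, ← H.eq, ← mul_assoc]
  · intro y hy
    simp only [mem_filter, mem_univ, true_and] at hy ⊢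
    obtain ⟨q, hq, rfl⟩ := hy
    refine ⟨q, hq, ?_⟩
    have H : Commute q⁻¹ c := (Commute.inv_left (hc q hq))
    simp only [← mul_assoc]
    rw [mul_assoc (q * x) c q⁻¹, ← H.eq, ← mul_assoc, mul_assoc (q * x * q⁻¹) c, mul_inv_cancel, mul_one]
  · intro y _; group
  · intro y _; group
  · intro y _
    rw [MonoidAlgebra.single_mul_single, one_mul]

lemma single_sub_one_mem_jacC {c : P} (hc : c ∈ Subgroup.centralizer (Q : Set P)) :
    MonoidAlgebra.single c (1:k) - MonoidAlgebra.single 1 (1:k) ∈ jacC k Q := by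
  constructor
  · exact sub_mem (Submodule.subset_span ⟨c, hc, rfl⟩)
      (Submodule.subset_span ⟨1, Subgroup.one_mem _, rfl⟩)
  · simp [aug, LinearMap.mem_ker, MonoidAlgebra.lift_single]

lemma jacC_eq_span :
    jacC k Q = Submodule.span k {f : MonoidAlgebra k P |
      ∃ c ∈ Subgroup.centralizer (Q : Set P),
        f = MonoidAlgebra.single c (1:k) - MonoidAlgebra.single 1 (1:k)} := by
  apply le_antisymm
  · rintro f ⟨hf1, hf2⟩
    have key : ∀ g ∈ subC k Q, g - (aug k P g) • MonoidAlgebra.single (1:P) (1:k) ∈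
        Submodule.span k {f : MonoidAlgebra k P |
          ∃ c ∈ Subgroup.centralizer (Q : Set P),
            f = MonoidAlgebra.single c (1:k) - MonoidAlgebra.single 1 (1:k)} := by
      intro g hg
      induction hg using Submodule.span_induction with
      | mem g hgm =>
        obtain ⟨c, hc, rfl⟩ := hgm
        have : aug k P (MonoidAlgebra.single c (1:k)) = 1 := by
          simp [aug, MonoidAlgebra.lift_single]
        rw [this, one_smul]
        exact Submodule.subset_span ⟨c, hc, rfl⟩
      | zero => simpa using Submodule.zero_mem _
      | add g₁ g₂ _ _ h₁ h₂ =>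
        have : g₁ + g₂ - (aug k P (g₁ + g₂)) • MonoidAlgebra.single (1:P) (1:k) =
            (g₁ - (aug k P g₁) • MonoidAlgebra.single (1:P) (1:k)) +
            (g₂ - (aug k P g₂) • MonoidAlgebra.single (1:P) (1:k)) := by
          rw [map_add]; rw [add_smul]; abel
        rw [this]; exact Submodule.add_mem _ h₁ h₂
      | smul a g₁ _ h₁ =>
        have : a • g₁ - (aug k P (a • g₁)) • MonoidAlgebra.single (1:P) (1:k) =
            a • (g₁ - (aug k P g₁) • MonoidAlgebra.single (1:P) (1:k)) := by
          rw [map_smul, smul_sub, smul_smul, smul_eq_mul]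
        rw [this]; exact Submodule.smul_mem _ _ h₁
    have hf2' : aug k P f = 0 := hf2
    have := key f hf1
    rwa [hf2', zero_smul, sub_zero] at this
  · rw [Submodule.span_le]
    rintro f ⟨c, hc, rfl⟩
    exact single_sub_one_mem_jacC Q hc

end Aux

open scoped commutatorElement


theorem stmt_6 {p : ℕ} [Fact p.Prime] (k : Type*) [Field k] [CharP k p]
    (P : Type*) [Group P] [Fintype P] [Group.IsNilpotent P]
    (hP : IsPGroup p P) (Q : Subgroup P)
    (h : Group.nilpotencyClass P = 2 ∨ (Subgroup.centralizer (Q : Set P)).Normal ∨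
      Subgroup.centralizer (Q : Set P) ≤ Q) :
    jacC k Q * idealI k Q = idealI k Q * jacC k Q :=  by
  classical
  set C := Subgroup.centralizer (Q : Set P) with hC
  -- key conjugation facts
  have key₁ : ∀ c ∈ C, ∀ x : P, ∃ c' ∈ C,
      (kappa Q (c * x) : MonoidAlgebra k P) = kappa Q (x * c') := by
    intro c hc x
    rcases h with hcl | hn | hle
    · refine ⟨x⁻¹ * c * x, ?_, by rw [show x * (x⁻¹ * c * x) = c * x by group]⟩
      have hcomm : ∀ a b g : P, ⁅a, b⁆ * g = g * ⁅a, b⁆ := by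
        intro a b g
        have hZ : (⊤ : Subgroup P).lowerCentralSeries 2 = ⊥ :=
          Subgroup.lowerCentralSeries_eq_bot_iff_nilpotencyClass_le.mpr (le_of_eq hcl)
        have h1 : ⁅a, b⁆ ∈ (⊤ : Subgroup P).lowerCentralSeries 1 := by
          rw [Subgroup.top_lowerCentralSeries_one, commutator_def]
          exact Subgroup.commutator_mem_commutator (Subgroup.mem_top _) (Subgroup.mem_top _)
        have h2 : ⁅⁅a, b⁆, g⁆ ∈ (⊤ : Subgroup P).lowerCentralSeries 2 :=
          Subgroup.commutator_mem_commutator h1 (Subgroup.mem_top _)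
        rw [hZ, Subgroup.mem_bot] at h2
        exact commutatorElement_eq_one_iff_mul_comm.mp h2
      rw [Subgroup.mem_centralizer_iff] at hc ⊢
      intro q hq
      have heq : x⁻¹ * c * x = c * ⁅c⁻¹, x⁻¹⁆ := by
        rw [commutatorElement_def]; group
      rw [heq, ← mul_assoc, hc q hq, mul_assoc, ← hcomm c⁻¹ x⁻¹ q, ← mul_assoc]
    · refine ⟨x⁻¹ * c * x, ?_, by rw [show x * (x⁻¹ * c * x) = c * x by group]⟩
      simpa using hn.conj_mem c hc x⁻¹
    · refine ⟨c, hc, ?_⟩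
      have := kappa_conj (k := k) Q (Q.inv_mem (hle hc)) (c * x)
      rw [show c⁻¹ * (c * x) * c⁻¹⁻¹ = x * c by group] at this
      exact this.symm
  have key₂ : ∀ c ∈ C, ∀ x : P, ∃ c' ∈ C,
      (kappa Q (x * c) : MonoidAlgebra k P) = kappa Q (c' * x) := by
    intro c hc x
    rcases h with hcl | hn | hle
    · refine ⟨x * c * x⁻¹, ?_, by rw [show (x * c * x⁻¹) * x = x * c by group]⟩
      have hcomm : ∀ a b g : P, ⁅a, b⁆ * g = g * ⁅a, b⁆ := by
        intro a b g
        have hZ : (⊤ : Subgroup P).lowerCentralSeries 2 = ⊥ :=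
          Subgroup.lowerCentralSeries_eq_bot_iff_nilpotencyClass_le.mpr (le_of_eq hcl)
        have h1 : ⁅a, b⁆ ∈ (⊤ : Subgroup P).lowerCentralSeries 1 := by
          rw [Subgroup.top_lowerCentralSeries_one, commutator_def]
          exact Subgroup.commutator_mem_commutator (Subgroup.mem_top _) (Subgroup.mem_top _)
        have h2 : ⁅⁅a, b⁆, g⁆ ∈ (⊤ : Subgroup P).lowerCentralSeries 2 :=
          Subgroup.commutator_mem_commutator h1 (Subgroup.mem_top _)
        rw [hZ, Subgroup.mem_bot] at h2
        exact commutatorElement_eq_one_iff_mul_comm.mp h2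
      rw [Subgroup.mem_centralizer_iff] at hc ⊢
      intro q hq
      have heq : x * c * x⁻¹ = c * ⁅c⁻¹, x⁆ := by
        rw [commutatorElement_def]; group
      rw [heq, ← mul_assoc, hc q hq, mul_assoc, ← hcomm c⁻¹ x q, ← mul_assoc]
    · refine ⟨x * c * x⁻¹, hn.conj_mem c hc x, by rw [show (x * c * x⁻¹) * x = x * c by group]⟩
    · refine ⟨c, hc, ?_⟩
      have := kappa_conj (k := k) Q (hle hc) (x * c)
      rw [show c * (x * c) * c⁻¹ = c * x by group] at this
      exact this.symm
  -- rewrite products as spans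
  rw [jacC_eq_span, idealI, Submodule.span_mul_span, Submodule.span_mul_span]
  apply le_antisymm <;> rw [Submodule.span_le]
  · rintro f hf
    rw [Set.mem_mul] at hf
    obtain ⟨t, ⟨c, hc, rfl⟩, s, ⟨x, hx, rfl⟩, rfl⟩ := hf
    obtain ⟨c', hc', hkey⟩ := key₁ c hc x
    have hone : (MonoidAlgebra.single (1:P) (1:k)) = 1 := rfl
    have : (MonoidAlgebra.single c (1:k) - MonoidAlgebra.single 1 (1:k)) * kappa Q x =
        kappa Q x * (MonoidAlgebra.single c' (1:k) - MonoidAlgebra.single 1 (1:k)) := by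
      rw [sub_mul, mul_sub, hone, one_mul, mul_one, single_mul_kappa Q hc, hkey,
        kappa_mul_single Q hc']
    rw [this]
    exact Submodule.subset_span (Set.mul_mem_mul ⟨x, hx, rfl⟩ ⟨c', hc', rfl⟩)
  · rintro f hf
    rw [Set.mem_mul] at hf
    obtain ⟨s, ⟨x, hx, rfl⟩, t, ⟨c, hc, rfl⟩, rfl⟩ := hf
    obtain ⟨c', hc', hkey⟩ := key₂ c hc x
    have hone : (MonoidAlgebra.single (1:P) (1:k)) = 1 := rfl
    have : kappa Q x * (MonoidAlgebra.single c (1:k) - MonoidAlgebra.single 1 (1:k)) =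
        (MonoidAlgebra.single c' (1:k) - MonoidAlgebra.single 1 (1:k)) * kappa Q x := by
      rw [sub_mul, mul_sub, hone, one_mul, mul_one, kappa_mul_single Q hc, hkey,
        single_mul_kappa Q hc']
    rw [this]
    exact Submodule.subset_span (Set.mul_mem_mul ⟨c', hc', rfl⟩ ⟨x, hx, rfl⟩)
end

section
/- Let $p$ be an odd prime, $P$ a finite $p$-group, and $Q \leq P$ a non-central subgroup. Then the action of $C = C_P(Q)$ by left multiplication on the set of $Q$-conjugation orbit sums $\Omega = \{\kappa_x : x \in P \setminus C\}$ has at least 2 orbits. -/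
set_option synthInstance.maxHeartbeats 1000000
set_option maxHeartbeats 1000000

open MonoidAlgebra Finset
open scoped Classical

theorem stmt_10 {p : ℕ} [Fact p.Prime] (hp : Odd p) {P : Type*} [Group P] [Fintype P]
    (hP : IsPGroup p P) (Q : Subgroup P) (hQ : ¬ Q ≤ Subgroup.center P) :
    ∃ x y : P, x ∉ Subgroup.centralizer (Q : Set P) ∧ y ∉ Subgroup.centralizer (Q : Set P) ∧
      ∀ c ∈ Subgroup.centralizer (Q : Set P), ∀ q ∈ Q, c * (q * x * q⁻¹) ≠ y := by

  classical
  set C := Subgroup.centralizer (Q : Set P) with hCdef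
  by_contra hcon
  push_neg at hcon
  -- hcon : ∀ x, x ∉ C → ∀ y, y ∉ C → ∃ c ∈ C, ∃ q ∈ Q, c * (q * x * q⁻¹) = y
  have hp' : p.Prime := Fact.out
  -- C is normalized by Q
  have key : ∀ z ∈ C, ∀ q ∈ Q, q * z * q⁻¹ ∈ C := by
    intro z hz q hq
    rw [Subgroup.mem_centralizer_iff] at hz ⊢
    intro g hg
    have h1 : q⁻¹ * g * q ∈ Q := Q.mul_mem (Q.mul_mem (Q.inv_mem hq) hg) hq
    have h2 := hz _ h1
    calc g * (q * z * q⁻¹) = q * ((q⁻¹ * g * q) * z) * q⁻¹ := by group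
      _ = q * (z * (q⁻¹ * g * q)) * q⁻¹ := by rw [h2]
      _ = (q * z * q⁻¹) * g := by group
  -- C ≠ ⊤
  have hCtop : C ≠ ⊤ := by
    intro h
    apply hQ
    intro q hq
    rw [Subgroup.mem_center_iff]
    intro g
    have hg : g ∈ C := h ▸ Subgroup.mem_top g
    exact (Subgroup.mem_centralizer_iff.mp hg q hq).symm
  obtain ⟨x₀, hx₀⟩ : ∃ x₀, x₀ ∉ C := by
    by_contra h
    push_neg at h
    exact hCtop (Subgroup.eq_top_iff' C |>.mpr h)
  -- the action of C × Q on P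
  letI sm : SMul (↥C × ↥Q) P := ⟨fun g y => (g.1 : P) * ((g.2 : P) * y * (g.2 : P)⁻¹)⟩
  have smul_def : ∀ (g : ↥C × ↥Q) (y : P),
      g • y = (g.1 : P) * ((g.2 : P) * y * (g.2 : P)⁻¹) := fun _ _ => rfl
  letI ma : MulAction (↥C × ↥Q) P :=
    { one_smul := fun y => by
        show ((1 : ↥C) : P) * (((1 : ↥Q) : P) * y * ((1 : ↥Q) : P)⁻¹) = y
        simp
      mul_smul := by
        rintro ⟨⟨c1, hc1⟩, ⟨q1, hq1⟩⟩ ⟨⟨c2, hc2⟩, ⟨q2, hq2⟩⟩ y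
        show (c1 * c2) * ((q1 * q2) * y * (q1 * q2)⁻¹)
            = c1 * (q1 * (c2 * (q2 * y * q2⁻¹)) * q1⁻¹)
        have hcomm : q1 * c2 = c2 * q1 :=
          Subgroup.mem_centralizer_iff.mp hc2 q1 hq1
        calc (c1 * c2) * ((q1 * q2) * y * (q1 * q2)⁻¹)
            = c1 * ((c2 * q1) * (q2 * y * q2⁻¹) * q1⁻¹) := by group
          _ = c1 * ((q1 * c2) * (q2 * y * q2⁻¹) * q1⁻¹) := by rw [hcomm]
          _ = c1 * (q1 * (c2 * (q2 * y * q2⁻¹)) * q1⁻¹) := by group }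
  -- the orbit of x₀ is exactly the complement of C
  have horb : MulAction.orbit (↥C × ↥Q) x₀ = {y : P | y ∉ C} := by
    ext y
    constructor
    · rintro ⟨⟨⟨c, hc⟩, ⟨q, hq⟩⟩, rfl⟩
      intro hmem
      replace hmem : c * (q * x₀ * q⁻¹) ∈ C := hmem
      apply hx₀
      have h1 : q * x₀ * q⁻¹ ∈ C := by
        have h2 := C.mul_mem (C.inv_mem hc) hmem
        rwa [← mul_assoc, inv_mul_cancel, one_mul] at h2
      have h3 := key _ h1 q⁻¹ (Q.inv_mem hq)
      simpa [mul_assoc] using h3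
    · intro hy
      obtain ⟨c, hc, q, hq, heq⟩ := hcon x₀ y hx₀ hy
      exact ⟨⟨⟨c, hc⟩, ⟨q, hq⟩⟩, heq⟩
  -- cardinalities
  have hdvd : Fintype.card (MulAction.orbit (↥C × ↥Q) x₀) ∣ Fintype.card (↥C × ↥Q) :=
    Dvd.intro _ (MulAction.card_orbit_mul_card_stabilizer_eq_card_group (↥C × ↥Q) x₀)
  obtain ⟨n, hn⟩ := (IsPGroup.iff_card).mp hP
  obtain ⟨m, hm⟩ := (IsPGroup.iff_card).mp (hP.to_subgroup C)
  obtain ⟨k, hk⟩ := (IsPGroup.iff_card).mp (hP.to_subgroup Q)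
  rw [Nat.card_eq_fintype_card] at hn hm hk
  have hcardorb : Fintype.card (MulAction.orbit (↥C × ↥Q) x₀) = p ^ n - p ^ m := by
    rw [← hn, ← hm]
    have : Fintype.card (MulAction.orbit (↥C × ↥Q) x₀)
        = Fintype.card {y : P // y ∉ C} := by
      apply Fintype.card_congr
      exact Equiv.subtypeEquiv (Equiv.refl P) (fun y => by
        rw [horb]; exact Iff.rfl)
    rw [this, Fintype.card_subtype_compl]
  have hcardG : Fintype.card (↥C × ↥Q) = p ^ (m + k) := by
    rw [Fintype.card_prod, hm, hk, pow_add]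
  have hmn : m < n := by
    have hle : Fintype.card ↥C ≤ Fintype.card P := Fintype.card_subtype_le _
    have hne : Fintype.card ↥C ≠ Fintype.card P := by
      intro h
      apply hCtop
      apply Subgroup.eq_top_of_card_eq
      rw [Nat.card_eq_fintype_card, Nat.card_eq_fintype_card, h]
    rw [hm, hn] at hle hne
    exact (Nat.pow_lt_pow_iff_right hp'.one_lt).mp (lt_of_le_of_ne hle hne)
  -- numerics
  rw [hcardorb, hcardG] at hdvd
  have hsplit : p ^ n - p ^ m = p ^ m * (p ^ (n - m) - 1) := by
    rw [Nat.mul_sub, mul_one, ← pow_add, Nat.add_sub_cancel' hmn.le]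
  set d := p ^ (n - m) - 1 with hd
  have hddvd : d ∣ p ^ (m + k) := dvd_trans ⟨p ^ m, by rw [hsplit, mul_comm]⟩ hdvd
  have hpd : ¬ p ∣ d := by
    intro hdvd'
    have h1 : p ∣ p ^ (n - m) := dvd_pow_self p (Nat.sub_ne_zero_of_lt hmn)
    have h2 : p ∣ p ^ (n - m) - d := Nat.dvd_sub h1 hdvd'
    have h3 : p ^ (n - m) - d = 1 := by
      have : 1 ≤ p ^ (n - m) := Nat.one_le_pow _ _ hp'.pos
      omega
    rw [h3] at h2
    exact absurd (Nat.dvd_one.mp h2) hp'.one_lt.ne'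
  have hcop : Nat.Coprime d (p ^ (m + k)) :=
    Nat.Coprime.pow_right _ (Nat.coprime_comm.mp (hp'.coprime_iff_not_dvd.mpr hpd))
  have hd1 : d = 1 := Nat.Coprime.eq_one_of_dvd hcop hddvd
  have hpow2 : p ^ (n - m) = 2 := by
    have : 1 ≤ p ^ (n - m) := Nat.one_le_pow _ _ hp'.pos
    omega
  have hp2 : p ∣ 2 := hpow2 ▸ dvd_pow_self p (Nat.sub_ne_zero_of_lt hmn)
  have : p = 2 := (Nat.prime_dvd_prime_iff_eq hp' Nat.prime_two).mp hp2
  rw [this] at hp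
  exact (Nat.not_odd_iff_even.mpr (by norm_num)) hp
end

section
/- Let $a$ generate a cyclic group of order $2^{n-1} \geq 4$, let $l = 2^{n-2}$, $z = a^l$, and let $k$ be a field of characteristic 2. Let $\psi$ be the algebra automorphism of $k\langle a\rangle$ induced by $a \mapsto a^{-1}$ (the case $s=0$), and let $\Lambda$ be the fixed subalgebra. Setting $\eta_i = a^i + a^{-i}$, the set $\{1, z, \eta_1, \ldots, \eta_{2l-1}\}$ spans $\Lambda$, $J(\Lambda)^l = 0$, and $a + a^3 + a^5 + \cdots + a^{2l-1} \in J(\Lambda)^{l-1} \setminus \{0\}$. -/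
set_option synthInstance.maxHeartbeats 1000000
set_option maxHeartbeats 1000000

open MonoidAlgebra Finset
open scoped Classical

lemma aux_charP (k : Type*) [Field k] [CharP k 2] (G : Type*) [Group G] :
    CharP (MonoidAlgebra k G) 2 := by
  have hinj : Function.Injective (algebraMap k (MonoidAlgebra k G)) := by
    intro x y h
    have := congrArg (MonoidAlgebra.lift k k G 1) h
    simpa using this
  exact charP_of_injective_algebraMap hinj 2

lemma geo {R : Type*} [CommRing R] [CharP R 2] (m : ℕ) (t : R) :
    (1 + t) ^ (2 ^ m - 1) = ∑ i ∈ Finset.range (2 ^ m), t ^ i := by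
  haveI : Fact (Nat.Prime 2) := ⟨Nat.prime_two⟩
  induction m with
  | zero => simp
  | succ m ih =>
    have h1 : 1 ≤ 2 ^ m := Nat.one_le_two_pow
    have h2 : 2 ^ (m + 1) - 1 = 2 ^ m + (2 ^ m - 1) := by omega
    have h3 : 2 ^ (m + 1) = 2 ^ m + 2 ^ m := by omega
    rw [h2, pow_add, add_pow_char_pow, one_pow, ih, h3, Finset.sum_range_add,
      add_mul, one_mul, Finset.mul_sum]
    congr 1
    exact Finset.sum_congr rfl fun i _ => by rw [← pow_add]

lemma powmono {R A : Type*} [CommSemiring R] [Semiring A] [Algebra R A]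
    {M N : Submodule R A} (h : M ≤ N) : ∀ i, M ^ i ≤ N ^ i := by
  intro i
  induction i with
  | zero => simp
  | succ i ih => rw [pow_succ, pow_succ]; exact mul_le_mul' ih h


lemma lemA {k : Type*} [Field k] {G : Type*} [CommGroup G] {z : G}
    (E : Submodule k (MonoidAlgebra k G))
    (hz : ∀ g : G, g⁻¹ = g → g = 1 ∨ g = z)
    (hE : ∀ g : G, MonoidAlgebra.single g (1 : k) + MonoidAlgebra.single g⁻¹ 1 ∈ E) :
    ∀ f : MonoidAlgebra k G, (∀ x : G, f.coeff x⁻¹ = f.coeff x) →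
      ∃ c d : k, ∃ h ∈ E, f = c • 1 + d • MonoidAlgebra.single z 1 + h := by
  have hsm : ∀ (x : G) (b : k),
      MonoidAlgebra.single x b = b • MonoidAlgebra.single x 1 := fun x b => by
    rw [MonoidAlgebra.smul_single', mul_one]
  have hone : ∀ b : k, MonoidAlgebra.single (1 : G) b = b • (1 : MonoidAlgebra k G) :=
    fun b => by rw [MonoidAlgebra.one_def, MonoidAlgebra.smul_single', mul_one]
  suffices H : ∀ (N : ℕ) (f : MonoidAlgebra k G), f.coeff.support.card ≤ N →
      (∀ x : G, f.coeff x⁻¹ = f.coeff x) →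
      ∃ c d : k, ∃ h ∈ E, f = c • 1 + d • MonoidAlgebra.single z 1 + h by
    intro f hf; exact H f.coeff.support.card f le_rfl hf
  intro N
  induction N with
  | zero =>
    intro f hcard _
    have hf0 : f = 0 := by
      rwa [Nat.le_zero, Finset.card_eq_zero, Finsupp.support_eq_empty, MonoidAlgebra.coeff_eq_zero] at hcard
    exact ⟨0, 0, 0, E.zero_mem, by simp [hf0]⟩
  | succ N ih =>
    intro f hcard hsym
    by_cases hf0 : f = 0
    · exact ⟨0, 0, 0, E.zero_mem, by simp [hf0]⟩
    obtain ⟨g, hg⟩ := Finsupp.support_nonempty_iff.mpr (MonoidAlgebra.coeff_eq_zero.not.mpr hf0)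
    have hfg : f.coeff g ≠ 0 := Finsupp.mem_support_iff.mp hg
    by_cases hgg : g⁻¹ = g
    · -- self-inverse case
      set f' : MonoidAlgebra k G := MonoidAlgebra.erase g f with hf'
      have hdec : f = MonoidAlgebra.single g (f.coeff g) + f' :=
        (MonoidAlgebra.single_add_erase g f).symm
      have hsym' : ∀ x : G, f'.coeff x⁻¹ = f'.coeff x := by
        intro x
        by_cases hx : x = g
        · subst hx; rw [hgg]
        · have hx2 : x⁻¹ ≠ g := fun hc => hx (by rw [← hgg, ← hc, inv_inv])
          rw [hf', MonoidAlgebra.coeff_erase, Finsupp.erase_ne hx2, Finsupp.erase_ne hx]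
          exact hsym x
      have hcard' : f'.coeff.support.card ≤ N := by
        rw [hf', MonoidAlgebra.coeff_erase, Finsupp.support_erase, Finset.card_erase_of_mem hg]
        omega
      obtain ⟨c, d, h, hh, hrep⟩ := ih f' hcard' hsym'
      rcases hz g hgg with h1 | h1
      · refine ⟨c + f.coeff g, d, h, hh, ?_⟩
        conv_lhs => rw [hdec, hrep]
        rw [h1, hone]
        module
      · refine ⟨c, d + f.coeff g, h, hh, ?_⟩
        conv_lhs => rw [hdec, hrep]
        rw [h1, hsm]
        module
    · -- non self-inverse case
      set F : MonoidAlgebra k G := MonoidAlgebra.erase g f with hF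
      set f' : MonoidAlgebra k G := MonoidAlgebra.erase g⁻¹ F with hf'
      have heval : ∀ y : G, f'.coeff y = if y = g⁻¹ ∨ y = g then 0 else f.coeff y := by
        intro y
        by_cases h1 : y = g⁻¹
        · rw [if_pos (Or.inl h1), hf', MonoidAlgebra.coeff_erase, h1, Finsupp.erase_same]
        · by_cases h2 : y = g
          · rw [if_pos (Or.inr h2), hf', MonoidAlgebra.coeff_erase, Finsupp.erase_ne h1, hF, MonoidAlgebra.coeff_erase, h2, Finsupp.erase_same]
          · rw [if_neg (by tauto), hf', MonoidAlgebra.coeff_erase, Finsupp.erase_ne h1, hF, MonoidAlgebra.coeff_erase, Finsupp.erase_ne h2]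
      have d3 : F.coeff g⁻¹ = f.coeff g := by rw [hF, MonoidAlgebra.coeff_erase, Finsupp.erase_ne hgg, hsym g]
      have d2 : F = MonoidAlgebra.single g⁻¹ (f.coeff g) + f' := by
        rw [← d3]; exact (MonoidAlgebra.single_add_erase g⁻¹ F).symm
      have d1 : f = MonoidAlgebra.single g (f.coeff g) + (MonoidAlgebra.single g⁻¹ (f.coeff g) + f') := by
        rw [← d2]; exact (MonoidAlgebra.single_add_erase g f).symm
      have hsym' : ∀ x : G, f'.coeff x⁻¹ = f'.coeff x := by
        intro x
        have e1 : (x⁻¹ = g⁻¹) ↔ (x = g) := inv_inj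
        have e2 : (x⁻¹ = g) ↔ (x = g⁻¹) := by
          constructor
          · intro hc; rw [← hc, inv_inv]
          · intro hc; rw [hc, inv_inv]
        rw [heval, heval, hsym x]
        simp only [e1, e2, or_comm]
      have hcard' : f'.coeff.support.card ≤ N := by
        have hsub : f'.coeff.support ⊆ f.coeff.support.erase g := by
          rw [hf', MonoidAlgebra.coeff_erase, Finsupp.support_erase, hF, MonoidAlgebra.coeff_erase, Finsupp.support_erase]
          exact Finset.erase_subset _ _
        have h2 := Finset.card_le_card hsub
        rw [Finset.card_erase_of_mem hg] at h2
        have h3 : 1 ≤ f.coeff.support.card := Finset.card_pos.mpr ⟨g, hg⟩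
        omega
      obtain ⟨c, d, h, hh, hrep⟩ := ih f' hcard' hsym'
      refine ⟨c, d, h + (f.coeff g) • (MonoidAlgebra.single g (1 : k) + MonoidAlgebra.single g⁻¹ 1),
        E.add_mem hh (E.smul_mem _ (hE g)), ?_⟩
      conv_lhs => rw [d1, hrep]
      rw [hsm g, hsm g⁻¹]
      module

noncomputable def WW (k : Type*) [Field k] {A : Type*} [CommRing A] [Algebra k A]
    (e w : A) (m : ℕ) : Submodule k A :=
  Submodule.span k ({x | ∃ j : ℕ, m ≤ j ∧ x = e ^ j} ∪ {x | ∃ j : ℕ, m ≤ j + 1 ∧ x = w * e ^ j})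

lemma WW_anti (k : Type*) [Field k] {A : Type*} [CommRing A] [Algebra k A]
    (e w : A) (m : ℕ) : WW k e w (m + 1) ≤ WW k e w m := by
  apply Submodule.span_mono
  apply Set.union_subset_union
  · rintro x ⟨j, hj, rfl⟩; exact ⟨j, by omega, rfl⟩
  · rintro x ⟨j, hj, rfl⟩; exact ⟨j, by omega, rfl⟩

lemma WW_mul (k : Type*) [Field k] {A : Type*} [CommRing A] [Algebra k A]
    {e w : A} (hww : w * w = 0) (m : ℕ) : WW k e w m * WW k e w 1 ≤ WW k e w (m + 1) := by
  rw [WW, WW, Submodule.span_mul_span, Submodule.span_le]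
  rintro x hx
  rcases Set.mem_mul.mp hx with ⟨p, hp, q, hq, rfl⟩
  simp only [SetLike.mem_coe]
  rcases hp with ⟨j, hj, rfl⟩ | ⟨j, hj, rfl⟩ <;> rcases hq with ⟨j', hj', rfl⟩ | ⟨j', hj', rfl⟩
  · exact Submodule.subset_span (Or.inl ⟨j + j', by omega, (pow_add _ _ _).symm⟩)
  · exact Submodule.subset_span (Or.inr ⟨j + j', by omega, by ring⟩)
  · exact Submodule.subset_span (Or.inr ⟨j + j', by omega, by ring⟩)
  · have h0 : (w * e ^ j) * (w * e ^ j') = (w * w) * (e ^ j * e ^ j') := by ring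
    rw [h0, hww, zero_mul]
    exact Submodule.zero_mem _

lemma WW_pow (k : Type*) [Field k] {A : Type*} [CommRing A] [Algebra k A]
    {e w : A} (hww : w * w = 0) : ∀ m, 1 ≤ m → WW k e w 1 ^ m ≤ WW k e w m := by
  intro m hm
  induction m with
  | zero => omega
  | succ m ih =>
    rcases Nat.lt_or_ge 1 (m + 1) with h1 | h1
    · have hm' : 1 ≤ m := by omega
      rw [pow_succ]
      exact le_trans (mul_le_mul' (ih hm') le_rfl) (WW_mul k hww m)
    · have : m = 0 := by omega
      subst this
      rw [pow_one]

lemma WW_bot (k : Type*) [Field k] {A : Type*} [CommRing A] [Algebra k A]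
    {e w : A} {l : ℕ} (hl : 1 ≤ l) (hel : e ^ l = 0) (hkey : w * e ^ (l - 1) = 0) :
    WW k e w l ≤ ⊥ := by
  rw [WW, Submodule.span_le]
  rintro x (⟨j, hj, rfl⟩ | ⟨j, hj, rfl⟩)
  · have h0 : e ^ j = e ^ l * e ^ (j - l) := by rw [← pow_add]; congr 1; omega
    simp [h0, hel]
  · have h0 : w * e ^ j = (w * e ^ (l - 1)) * e ^ (j - (l - 1)) := by
      rw [mul_assoc, ← pow_add]; congr 2; omega
    simp [h0, hkey]

theorem stmt_18 (n : ℕ) (hn : 3 ≤ n) (k : Type*) [Field k] [CharP k 2]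
    (G : Type*) [CommGroup G] (a : G) (hgen : ∀ g : G, g ∈ Subgroup.zpowers a)
    (hord : orderOf a = 2 ^ (n - 1)) :
    let Λ := AlgHom.equalizer
      (MonoidAlgebra.domCongr k k (MulEquiv.inv G)).toAlgHom
      (AlgHom.id k (MonoidAlgebra k G))
    Subalgebra.toSubmodule Λ = Submodule.span k
      ({1, MonoidAlgebra.single (a ^ (2 ^ (n - 2))) (1 : k)} ∪
        {f | ∃ i : ℕ, 1 ≤ i ∧ i ≤ 2 * 2 ^ (n - 2) - 1 ∧
          f = MonoidAlgebra.single (a ^ i) (1 : k) +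
              MonoidAlgebra.single ((a ^ i)⁻¹) (1 : k)}) ∧
    jacRad k Λ ^ (2 ^ (n - 2)) = ⊥ ∧
    ∃ z : Λ, (z : MonoidAlgebra k G) =
        ∑ i ∈ Finset.range (2 ^ (n - 2)), MonoidAlgebra.single (a ^ (2 * i + 1)) (1 : k) ∧
      z ∈ jacRad k Λ ^ (2 ^ (n - 2) - 1) ∧ z ≠ 0 := by
  intro Λ
  haveI hFact : Fact (Nat.Prime 2) := ⟨Nat.prime_two⟩
  haveI hchar : CharP (MonoidAlgebra k G) 2 := aux_charP k G
  set l : ℕ := 2 ^ (n - 2) with hl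
  have hl2 : 2 ≤ l := by
    rw [hl]
    calc 2 = 2 ^ 1 := rfl
      _ ≤ 2 ^ (n - 2) := Nat.pow_le_pow_right (by norm_num) (by omega)
  have h2l : 2 * l = 2 ^ (n - 1) := by
    rw [hl, ← pow_succ']
    congr 1
    omega
  have hordl : orderOf a = 2 * l := by rw [hord, h2l]
  have ha2l : a ^ (2 * l) = 1 := by rw [← hordl]; exact pow_orderOf_eq_one a
  set u : MonoidAlgebra k G := MonoidAlgebra.single a 1 with hu
  set v : MonoidAlgebra k G := MonoidAlgebra.single a⁻¹ 1 with hv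
  have huv : u * v = 1 := by
    rw [hu, hv, MonoidAlgebra.single_mul_single, mul_inv_cancel, mul_one]
    exact (MonoidAlgebra.one_def).symm
  have hupow : ∀ i : ℕ, MonoidAlgebra.single (a ^ i) (1 : k) = u ^ i := fun i => by
    rw [hu, MonoidAlgebra.single_pow, one_pow]
  have hvpow : ∀ i : ℕ, MonoidAlgebra.single ((a ^ i)⁻¹) (1 : k) = v ^ i := fun i => by
    rw [hv, MonoidAlgebra.single_pow, one_pow, inv_pow]
  have hu2l : u ^ (2 * l) = 1 := by
    rw [← hupow, ha2l]; exact (MonoidAlgebra.one_def).symm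
  have h2z : (2 : MonoidAlgebra k G) = 0 := CharTwo.two_eq_zero
  have h2k : (1 : k) + 1 = 0 := CharTwo.add_self_eq_zero 1
  have heu : (1 + u) ^ (2 * l) = 0 := by
    rw [h2l, add_pow_char_pow, one_pow, ← h2l, hu2l]
    linear_combination h2z
  have hul : (1 + u) ^ l = 1 + u ^ l := by
    rw [hl, add_pow_char_pow, one_pow]
  have hsq' : (1 + u) ^ 2 = 1 + u ^ 2 := by
    rw [add_pow_char, one_pow]
  have hfac : u + v = v * (1 + u) ^ 2 := by
    rw [hsq']
    linear_combination (-u) * huv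
  have hkey0 : ∀ j : ℕ, 2 * l ≤ j → (1 + u) ^ j = 0 := by
    intro j hj
    rw [show j = 2 * l + (j - 2 * l) by omega, pow_add, heu, zero_mul]
  have hkey : (1 + u ^ l) * (u + v) ^ (l - 1) = 0 := by
    rw [← hul, hfac, mul_pow, ← pow_mul]
    calc (1 + u) ^ l * (v ^ (l - 1) * (1 + u) ^ (2 * (l - 1)))
        = v ^ (l - 1) * (1 + u) ^ (l + 2 * (l - 1)) := by rw [pow_add]; ring
      _ = 0 := by rw [hkey0 _ (by omega), mul_zero]
  have hz2 : a ^ l * a ^ l = 1 := by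
    rw [← pow_add, show l + l = 2 * l by ring]; exact ha2l
  have hzinv : (a ^ l)⁻¹ = a ^ l := inv_eq_of_mul_eq_one_right hz2
  have hvul : v ^ l = u ^ l := by rw [← hvpow, ← hupow, hzinv]
  have hη1l : (u + v) ^ l = 0 := by
    rw [hl, add_pow_char_pow, ← hl, hvul]
    exact CharTwo.add_self_eq_zero _
  have hz2' : u ^ l * u ^ l = 1 := by
    rw [← pow_add, show l + l = 2 * l by ring, hu2l]
  have hww : (1 + u ^ l) * (1 + u ^ l) = 0 := by
    linear_combination hz2' + (1 + u ^ l) * h2z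
  have hgeo : (1 + u ^ 2) ^ (l - 1) = ∑ i ∈ Finset.range l, (u ^ 2) ^ i := by
    have := geo (n - 2) (u ^ 2)
    rwa [← hl] at this
  have hw : ∑ i ∈ Finset.range l, MonoidAlgebra.single (a ^ (2 * i + 1)) (1 : k)
      = (u + v) ^ (l - 1) := by
    have e1 : ∑ i ∈ Finset.range l, MonoidAlgebra.single (a ^ (2 * i + 1)) (1 : k)
        = u * ∑ i ∈ Finset.range l, (u ^ 2) ^ i := by
      rw [Finset.mul_sum]
      refine Finset.sum_congr rfl fun i _ => ?_
      rw [hupow, pow_succ', pow_mul]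
    have e2 : (u + v) ^ (l - 1) = v ^ (l - 1) * (1 + u) ^ (2 * (l - 1)) := by
      rw [hfac, mul_pow, ← pow_mul]
    have e3 : v ^ (l - 1) * u ^ l = u := by
      have e3' : u ^ l = u ^ (l - 1) * u := by
        rw [← pow_succ]; congr 1; omega
      rw [e3', ← mul_assoc, ← mul_pow, mul_comm v u, huv, one_pow, one_mul]
    have e4 : (1 + u ^ l) * (1 + u) ^ (2 * (l - 1)) = 0 := by
      rw [← hul, ← pow_add, hkey0 _ (by omega)]
    rw [e1, ← hgeo, ← hsq', ← pow_mul, e2]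
    linear_combination (-((1 + u) ^ (2 * (l - 1)))) * e3 - v ^ (l - 1) * e4
      + (v ^ (l - 1) * u ^ l * (1 + u) ^ (2 * (l - 1))) * h2z
  -- membership criterion for Λ
  have hΛiff : ∀ f : MonoidAlgebra k G, f ∈ Λ ↔ ∀ x : G, f.coeff x⁻¹ = f.coeff x := by
    intro f
    constructor
    · intro hf x
      have h0 : (MonoidAlgebra.domCongr k k (MulEquiv.inv G)) f = f := hf
      have h1 := congrArg (fun F : MonoidAlgebra k G => F.coeff x) h0
      simpa [MonoidAlgebra.domCongr_apply] using h1
    · intro hs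
      show (MonoidAlgebra.domCongr k k (MulEquiv.inv G)) f = f
      apply MonoidAlgebra.ext
      apply Finsupp.ext
      intro x
      rw [MonoidAlgebra.domCongr_apply]
      show f.coeff ((MulEquiv.inv G).symm x) = f.coeff x
      have h0 : (MulEquiv.inv G).symm x = x⁻¹ := rfl
      rw [h0]
      exact hs x
  have hswap : ∀ (g x : G), (MonoidAlgebra.single g (1 : k)).coeff x⁻¹
      = (MonoidAlgebra.single g⁻¹ (1 : k)).coeff x := by
    intro g x
    rw [MonoidAlgebra.single_apply, MonoidAlgebra.single_apply]
    by_cases hx : g = x⁻¹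
    · rw [if_pos hx, if_pos (by rw [hx, inv_inv])]
    · rw [if_neg hx, if_neg (fun hc => hx (by rw [← hc, inv_inv]))]
  -- self-inverse classification
  have hself : ∀ g : G, g⁻¹ = g → g = 1 ∨ g = a ^ l := by
    intro g hgg
    obtain ⟨m, hm⟩ := Subgroup.mem_zpowers_iff.mp (hgen g)
    subst hm
    have h2m : a ^ (2 * m) = 1 := by
      rw [two_mul, zpow_add]
      nth_rewrite 1 [← hgg]
      simp
    have hdvd : ((2 * l : ℕ) : ℤ) ∣ 2 * m := by
      have h0 : ((orderOf a : ℕ) : ℤ) ∣ 2 * m := orderOf_dvd_iff_zpow_eq_one.mpr h2m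
      rwa [hordl] at h0
    have hdvd2 : (l : ℤ) ∣ m := by
      rcases hdvd with ⟨q, hq⟩
      push_cast at hq
      exact ⟨q, by linarith⟩
    obtain ⟨q, hq⟩ := hdvd2
    have hzq : a ^ m = (a ^ l) ^ q := by
      rw [hq, zpow_mul, zpow_natCast]
    rcases Int.even_or_odd q with ⟨s, hs⟩ | ⟨s, hs⟩
    · left
      rw [hzq, hs, zpow_add, ← mul_zpow, hz2, one_zpow]
    · right
      rw [hzq, hs, zpow_add, zpow_one, zpow_mul,
        show (a ^ l) ^ (2 : ℤ) = 1 by rw [zpow_two, hz2], one_zpow, one_mul]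
  -- the eta generating set
  set Eset : Set (MonoidAlgebra k G) :=
    {f | ∃ i : ℕ, 1 ≤ i ∧ i ≤ 2 * l - 1 ∧
      f = MonoidAlgebra.single (a ^ i) (1 : k) +
          MonoidAlgebra.single ((a ^ i)⁻¹) (1 : k)} with hEset
  set Espan : Submodule k (MonoidAlgebra k G) := Submodule.span k Eset with hEspan
  have hredE : ∀ g : G, MonoidAlgebra.single g (1 : k) + MonoidAlgebra.single g⁻¹ 1 ∈ Espan := by
    intro g
    obtain ⟨m, hm⟩ := Subgroup.mem_zpowers_iff.mp (hgen g)
    subst hm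
    have hb1 : 0 ≤ m % ((2 * l : ℕ) : ℤ) := Int.emod_nonneg m (by positivity)
    have hb2 : m % ((2 * l : ℕ) : ℤ) < ((2 * l : ℕ) : ℤ) :=
      Int.emod_lt_of_pos m (by positivity)
    set i : ℕ := (m % ((2 * l : ℕ) : ℤ)).toNat with hidef
    have hilt : i < 2 * l := by omega
    have hmi : a ^ m = a ^ i := by
      rw [← zpow_natCast a i, hidef, Int.toNat_of_nonneg hb1,
        show ((2 * l : ℕ) : ℤ) = ((orderOf a : ℕ) : ℤ) by exact_mod_cast hordl.symm]
      exact (zpow_mod_orderOf a m).symm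
    rw [hmi]
    by_cases h0 : i = 0
    · rw [h0, pow_zero, inv_one, ← MonoidAlgebra.single_add, h2k, MonoidAlgebra.single_zero]
      exact Submodule.zero_mem _
    · exact Submodule.subset_span ⟨i, by omega, by omega, rfl⟩
  have hstruct := lemA Espan hself hredE
  -- augmentation facts
  have haugsingle : ∀ (g : G) (c : k), aug k G (MonoidAlgebra.single g c) = c := by
    intro g c
    simp [aug, MonoidAlgebra.lift_single]
  have haugE : ∀ x ∈ Espan, aug k G x = 0 := by
    intro x hx
    have hle : Espan ≤ LinearMap.ker (aug k G).toLinearMap := by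
      rw [hEspan, Submodule.span_le]
      rintro _ ⟨i, _, _, rfl⟩
      simp [LinearMap.mem_ker, haugsingle, h2k]
    exact LinearMap.mem_ker.mp (hle hx)
  refine ⟨?_, ?_, ?_⟩
  · -- Part 1 : the spanning set
    apply le_antisymm
    · intro f hf
      have hsymf : ∀ x : G, f.coeff x⁻¹ = f.coeff x :=
        (hΛiff f).mp ((Subalgebra.mem_toSubmodule _).mp hf)
      obtain ⟨c, d, h, hh, rfl⟩ := hstruct f hsymf
      refine Submodule.add_mem _ (Submodule.add_mem _ ?_ ?_) ?_
      · exact Submodule.smul_mem _ _ (Submodule.subset_span (Or.inl (Set.mem_insert _ _)))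
      · exact Submodule.smul_mem _ _
          (Submodule.subset_span (Or.inl (Set.mem_insert_of_mem _ rfl)))
      · exact Submodule.span_mono Set.subset_union_right hh
    · rw [Submodule.span_le]
      have hmem : ∀ g : G, g⁻¹ = g → MonoidAlgebra.single g (1 : k) ∈ Λ := by
        intro g hg
        rw [hΛiff]
        intro x
        rw [hswap, hg]
      rintro f (hf | hf)
      · rcases hf with rfl | hf
        · simp only [SetLike.mem_coe, Subalgebra.mem_toSubmodule]
          exact one_mem Λ
        · rw [Set.mem_singleton_iff] at hf
          subst hf
          simp only [SetLike.mem_coe, Subalgebra.mem_toSubmodule]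
          exact hmem _ hzinv
      · obtain ⟨i, _, _, rfl⟩ := hf
        simp only [SetLike.mem_coe, Subalgebra.mem_toSubmodule]
        rw [hΛiff]
        intro x
        rw [MonoidAlgebra.coeff_add, Finsupp.add_apply, Finsupp.add_apply, hswap, hswap, inv_inv]
        exact add_comm _ _
  · -- Part 2 : J^l = 0
    have hclose : ∀ x ∈ WW k (u + v) (1 + u ^ l) 1,
        x * (u + v) ∈ WW k (u + v) (1 + u ^ l) 1 := by
      intro x hx
      have h1 : (u + v) ∈ WW k (u + v) (1 + u ^ l) 1 :=
        Submodule.subset_span (Or.inl ⟨1, le_rfl, (pow_one _).symm⟩)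
      exact (le_trans (WW_mul k hww 1) (WW_anti k _ _ 1)) (Submodule.mul_mem_mul hx h1)
    have hηV : ∀ i : ℕ, u ^ i + v ^ i ∈ WW k (u + v) (1 + u ^ l) 1 ∧
        u ^ (i + 1) + v ^ (i + 1) ∈ WW k (u + v) (1 + u ^ l) 1 := by
      intro i
      induction i with
      | zero =>
        constructor
        · rw [pow_zero, pow_zero, CharTwo.add_self_eq_zero]
          exact Submodule.zero_mem _
        · rw [pow_one, pow_one]
          exact Submodule.subset_span (Or.inl ⟨1, le_rfl, (pow_one _).symm⟩)
      | succ i ih =>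
        refine ⟨ih.2, ?_⟩
        have e1 : u ^ (i + 1) * v = u ^ i := by
          rw [pow_succ, mul_assoc, huv, mul_one]
        have e2 : v ^ (i + 1) * u = v ^ i := by
          rw [pow_succ, mul_assoc, mul_comm v u, huv, mul_one]
        have hident : u ^ (i + 1 + 1) + v ^ (i + 1 + 1)
            = (u ^ (i + 1) + v ^ (i + 1)) * (u + v) + (u ^ i + v ^ i) := by
          linear_combination -e1 - e2 - (u ^ i + v ^ i) * h2z
        rw [hident]
        exact Submodule.add_mem _ (hclose _ ih.2) ih.1
    have hEW : Espan ≤ WW k (u + v) (1 + u ^ l) 1 := by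
      rw [hEspan, Submodule.span_le]
      rintro _ ⟨i, _, _, rfl⟩
      rw [hupow, hvpow]
      exact (hηV i).1
    have hJle : ∀ y : Λ, y ∈ jacRad k Λ → aug k G (y : MonoidAlgebra k G) = 0 := by
      intro y hy
      have hsurj : Function.Surjective ((aug k G).comp (Subalgebra.val Λ)) := by
        intro c
        refine ⟨algebraMap k Λ c, ?_⟩
        have := ((aug k G).comp (Subalgebra.val Λ)).commutes c
        simpa using this
      have hmax : (RingHom.ker ((aug k G).comp (Subalgebra.val Λ))).IsMaximal :=
        RingHom.ker_isMaximal_of_surjective _ hsurj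
      have hy' : y ∈ (⊥ : Ideal Λ).jacobson := hy
      have hle : (⊥ : Ideal Λ).jacobson ≤ RingHom.ker ((aug k G).comp (Subalgebra.val Λ)) :=
        sInf_le ⟨bot_le, hmax⟩
      have h0 := RingHom.mem_ker.mp (hle hy')
      simpa using h0
    have h2kk : (2 : k) = 0 := CharTwo.two_eq_zero
    have hMle : Submodule.map (Subalgebra.val Λ).toLinearMap (jacRad k Λ)
        ≤ WW k (u + v) (1 + u ^ l) 1 := by
      intro x hx
      obtain ⟨y, hy, rfl⟩ := Submodule.mem_map.mp hx
      have haug0 : aug k G (y : MonoidAlgebra k G) = 0 := hJle y hy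
      have hyΛ : (y : MonoidAlgebra k G) ∈ Λ := y.2
      obtain ⟨c, d, h, hh, hrep⟩ := hstruct _ ((hΛiff _).mp hyΛ)
      have hcd : c + d = 0 := by
        rw [hrep, map_add, map_add, map_smul, map_smul, haugsingle, map_one,
          haugE h hh, smul_eq_mul, smul_eq_mul, mul_one, mul_one, add_zero] at haug0
        exact haug0
      have hdc : d = c := by linear_combination hcd - c * h2kk
      have hxval : (Subalgebra.val Λ).toLinearMap y = c • (1 + u ^ l) + h := by
        show (y : MonoidAlgebra k G) = c • (1 + u ^ l) + h
        rw [hrep, hdc, hupow]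
        module
      rw [hxval]
      refine Submodule.add_mem _ (Submodule.smul_mem _ _ ?_) (hEW hh)
      exact Submodule.subset_span (Or.inr ⟨0, by omega, by rw [pow_zero, mul_one]⟩)
    have hinj : Function.Injective ((Subalgebra.val Λ).toLinearMap) := Subtype.val_injective
    apply Submodule.map_injective_of_injective hinj
    rw [Submodule.map_bot, Submodule.map_pow]
    have h1 := powmono hMle l
    have h2 := WW_pow k (e := u + v) hww l (by omega)
    have h3 := WW_bot k (e := u + v) (w := 1 + u ^ l) (l := l) (by omega) hη1l hkey
    exact le_bot_iff.mp (le_trans h1 (le_trans h2 h3))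
  · -- Part 3 : the socle element
    have hηΛ : (u + v) ∈ Λ := by
      rw [hΛiff]
      intro x
      rw [hu, hv, MonoidAlgebra.coeff_add, Finsupp.add_apply, Finsupp.add_apply, hswap, hswap, inv_inv]
      exact add_comm _ _
    set ηe : Λ := ⟨u + v, hηΛ⟩ with hηedef
    have hηenil : ηe ^ l = 0 := by
      apply Subtype.ext
      rw [SubmonoidClass.coe_pow, ZeroMemClass.coe_zero]
      exact hη1l
    have hηeJ : ηe ∈ jacRad k Λ := by
      have hrad : ηe ∈ nilradical Λ := mem_nilradical.mpr ⟨l, hηenil⟩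
      have hrad' : ηe ∈ (⊥ : Ideal Λ).radical := by
        rw [← Ideal.zero_eq_bot]
        exact hrad
      have hmem : ηe ∈ (⊥ : Ideal Λ).jacobson := Ideal.radical_le_jacobson hrad'
      exact hmem
    refine ⟨ηe ^ (l - 1), ?_, ?_, ?_⟩
    · rw [SubmonoidClass.coe_pow]
      exact hw.symm
    · exact Submodule.pow_mem_pow _ hηeJ (l - 1)
    · intro hc
      have hcoe : ((ηe ^ (l - 1) : Λ) : MonoidAlgebra k G) = 0 := by
        rw [hc]; rfl
      rw [SubmonoidClass.coe_pow, ← hw] at hcoe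
      have heval : (∑ i ∈ Finset.range l,
          MonoidAlgebra.single (a ^ (2 * i + 1)) (1 : k)).coeff a = 0 := by
        rw [hcoe]; rfl
      have hone1 : (∑ i ∈ Finset.range l,
          MonoidAlgebra.single (a ^ (2 * i + 1)) (1 : k)).coeff a = 1 := by
        rw [MonoidAlgebra.coeff_sum, Finset.sum_apply', Finset.sum_eq_single (0 : ℕ)]
        · rw [MonoidAlgebra.single_apply,
            if_pos (by rw [show 2 * 0 + 1 = 1 by norm_num, pow_one])]
        · intro i hi hne
          rw [MonoidAlgebra.single_apply, if_neg ?_]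
          intro hc2
          have hmodeq : (2 * i + 1) ≡ 1 [MOD orderOf a] := by
            have h5 : a ^ (2 * i + 1) = a ^ 1 := by rw [pow_one]; exact hc2
            exact pow_eq_pow_iff_modEq.mp h5
          rw [hordl] at hmodeq
          have hdvd : (2 * l) ∣ (2 * i + 1) - 1 :=
            (Nat.modEq_iff_dvd' (by omega)).mp hmodeq.symm
          rw [show (2 * i + 1) - 1 = 2 * i by omega] at hdvd
          have hli : l ∣ i := (mul_dvd_mul_iff_left (two_ne_zero)).mp hdvd
          obtain ⟨q, hq⟩ := hli
          rcases Nat.eq_zero_or_pos q with h | h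
          · rw [h, mul_zero] at hq
            exact hne hq
          · have h6 : l ≤ i := by
              calc l = l * 1 := by ring
                _ ≤ l * q := Nat.mul_le_mul_left l h
                _ = i := hq.symm
            have h7 : i < l := Finset.mem_range.mp hi
            omega
        · intro h0
          exact absurd (Finset.mem_range.mpr (by omega)) h0
      rw [hone1] at heval
      exact one_ne_zero heval
end
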